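/- Let W = {W_1, ..., W_m} be a finite set of d×k real matrices and let C(W)* = { Σᵢ Wᵢ Xᵢ Wᵢᵀ : Xᵢ ∈ S^k_+ }. Then C(W)* is a closed convex cone, and its dual cone equals C(W) := { X ∈ S^d : Wᵢᵀ X Wᵢ ⪰ 0 for all i }. Moreover C(W)* ⊆ S^d_+ ⊆ C(W). -/

import Mathlib

open Matrix

namespace MinkowskiSumAux

attribute [local instance] Matrix.normedAddCommGroup Matrix.normedSpace

variable {d k m : ℕ}

open scoped MatrixOrder in
lemma Matrix.posSemidef_iff_eq_transpose_mul_self {n : ℕ} {A : Matrix (Fin n) (Fin n) ℝ} :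
    A.PosSemidef ↔ ∃ B : Matrix (Fin n) (Fin n) ℝ, A = Bᴴ * B := by
  refine ⟨fun hA => ⟨CFC.sqrt A, ?_⟩, fun ⟨B, hB⟩ => hB ▸ posSemidef_conjTranspose_mul_self B⟩
  rw [(CFC.sqrt_nonneg A).posSemidef.1.eq, CFC.sqrt_mul_sqrt_self A hA.nonneg]

lemma psd_add {n : ℕ} {A B : Matrix (Fin n) (Fin n) ℝ} (hA : A.PosSemidef)
    (hB : B.PosSemidef) : (A + B).PosSemidef :=
  hA.add hB

lemma psd_smul {n : ℕ} {A : Matrix (Fin n) (Fin n) ℝ} (hA : A.PosSemidef) {a : ℝ}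
    (ha : 0 ≤ a) : (a • A).PosSemidef := by
  refine Matrix.PosSemidef.of_dotProduct_mulVec_nonneg ?_ fun x => ?_
  · rw [Matrix.IsHermitian, conjTranspose_smul, star_trivial, hA.1]
  · rw [smul_mulVec, dotProduct_smul, smul_eq_mul]
    exact mul_nonneg ha (by simpa using hA.dotProduct_mulVec_nonneg x)

lemma psd_sum {n N : ℕ} {f : Fin N → Matrix (Fin n) (Fin n) ℝ}
    (hf : ∀ i, (f i).PosSemidef) : (∑ i, f i).PosSemidef := by
  classical
  induction (Finset.univ : Finset (Fin N)) using Finset.induction with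
  | empty => simpa using Matrix.PosSemidef.zero
  | insert a s hx ih => rw [Finset.sum_insert hx]; exact psd_add (hf _) ih

lemma psd_trace_nonneg {n : ℕ} {A : Matrix (Fin n) (Fin n) ℝ} (hA : A.PosSemidef) :
    0 ≤ A.trace := by
  rw [Matrix.trace]
  refine Finset.sum_nonneg fun j _ => ?_
  have := hA.dotProduct_mulVec_nonneg (Pi.single j 1)
  simpa [dotProduct, mulVec, Pi.single_apply, Finset.sum_ite_eq] using this

lemma psd_sqrt_repr {n : ℕ} {A : Matrix (Fin n) (Fin n) ℝ} (hA : A.PosSemidef) :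
    ∃ B : Matrix (Fin n) (Fin n) ℝ, A = Bᵀ * B := by
  obtain ⟨B, hB⟩ := Matrix.posSemidef_iff_eq_transpose_mul_self.mp hA
  exact ⟨B, by rwa [conjTranspose_eq_transpose_of_trivial] at hB⟩

lemma psd_conj_left {n p : ℕ} {A : Matrix (Fin n) (Fin n) ℝ} (hA : A.PosSemidef)
    (B : Matrix (Fin p) (Fin n) ℝ) : (B * A * Bᵀ).PosSemidef := by
  have := hA.mul_mul_conjTranspose_same B
  rwa [conjTranspose_eq_transpose_of_trivial] at this

lemma psd_conj_right {n p : ℕ} {A : Matrix (Fin n) (Fin n) ℝ} (hA : A.PosSemidef)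
    (B : Matrix (Fin n) (Fin p) ℝ) : (Bᵀ * A * B).PosSemidef := by
  have := hA.conjTranspose_mul_mul_same B
  rwa [conjTranspose_eq_transpose_of_trivial] at this

lemma trace_mul_psd_nonneg {n : ℕ} {A B : Matrix (Fin n) (Fin n) ℝ}
    (hA : A.PosSemidef) (hB : B.PosSemidef) : 0 ≤ (A * B).trace := by
  obtain ⟨C, rfl⟩ := psd_sqrt_repr hB
  have h1 : (A * (Cᵀ * C)).trace = (C * A * Cᵀ).trace := by
    rw [← Matrix.mul_assoc, Matrix.trace_mul_comm, ← Matrix.mul_assoc]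
  rw [h1]
  exact psd_trace_nonneg (psd_conj_left hA C)

lemma trace_mul_vecMulVec {n : ℕ} (A : Matrix (Fin n) (Fin n) ℝ) (x y : Fin n → ℝ) :
    (A * vecMulVec x y).trace = y ⬝ᵥ (A *ᵥ x) := by
  simp [Matrix.trace, Matrix.diag, mul_apply, vecMulVec_apply, mulVec, dotProduct,
    Finset.mul_sum, mul_comm, mul_assoc, mul_left_comm]

lemma psd_vecMulVec {n : ℕ} (x : Fin n → ℝ) : (vecMulVec x x).PosSemidef := by
  have := Matrix.posSemidef_conjTranspose_mul_self (Matrix.replicateRow (Fin 1) x)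
  convert this using 1
  ext i j
  simp [vecMulVec_apply, mul_apply, Matrix.row, mul_comm]

lemma entry_sq_le (C : Fin m → Matrix (Fin k) (Fin d) ℝ) (i : Fin m) (a : Fin k) (b : Fin d) :
    (C i a b) ^ 2 ≤ (∑ j, (C j)ᵀ * (C j)).trace := by
  have h1 : ∀ A : Matrix (Fin k) (Fin d) ℝ, (Aᵀ * A).trace = ∑ a, ∑ b, (A a b) ^ 2 := by
    intro A
    simp only [Matrix.trace, Matrix.diag, mul_apply, transpose_apply, sq]
    exact Finset.sum_comm
  rw [trace_sum]
  calc (C i a b) ^ 2 ≤ ∑ b', (C i a b') ^ 2 :=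
        Finset.single_le_sum (f := fun b' => (C i a b') ^ 2)
          (fun _ _ => sq_nonneg _) (Finset.mem_univ b)
    _ ≤ ∑ a', ∑ b', (C i a' b') ^ 2 :=
        Finset.single_le_sum (f := fun a' => ∑ b', (C i a' b') ^ 2)
          (fun _ _ => Finset.sum_nonneg fun _ _ => sq_nonneg _) (Finset.mem_univ a)
    _ = ((C i)ᵀ * C i).trace := (h1 _).symm
    _ ≤ ∑ j, ((C j)ᵀ * C j).trace := by
        refine Finset.single_le_sum (f := fun j => ((C j)ᵀ * C j).trace) (fun j _ => ?_)
          (Finset.mem_univ i)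
        show 0 ≤ ((C j)ᵀ * C j).trace
        rw [h1]
        exact Finset.sum_nonneg fun _ _ => Finset.sum_nonneg fun _ _ => sq_nonneg _

def mulRightLin (W : Fin m → Matrix (Fin d) (Fin k) ℝ) (i : Fin m) :
    Matrix (Fin k) (Fin k) ℝ →ₗ[ℝ] Matrix (Fin k) (Fin d) ℝ where
  toFun B := B * (W i)ᵀ
  map_add' A B := Matrix.add_mul _ _ _
  map_smul' c A := by simp [smul_mul_assoc]

lemma closed_S (W : Fin m → Matrix (Fin d) (Fin k) ℝ) :
    IsClosed {X : Matrix (Fin d) (Fin d) ℝ |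
        ∃ Xi : Fin m → Matrix (Fin k) (Fin k) ℝ,
          (∀ i, (Xi i).PosSemidef) ∧ X = ∑ i, W i * Xi i * (W i)ᵀ} := by
  classical
  set F : (Fin m → Matrix (Fin k) (Fin d) ℝ) → Matrix (Fin d) (Fin d) ℝ :=
    fun C => ∑ i, (C i)ᵀ * (C i) with hF
  set K : Set (Fin m → Matrix (Fin k) (Fin d) ℝ) :=
    {C | ∀ i, C i ∈ LinearMap.range (mulRightLin W i)} with hKdef
  have hSK : {X : Matrix (Fin d) (Fin d) ℝ |
        ∃ Xi : Fin m → Matrix (Fin k) (Fin k) ℝ,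
          (∀ i, (Xi i).PosSemidef) ∧ X = ∑ i, W i * Xi i * (W i)ᵀ} = F '' K := by
    ext X
    constructor
    · rintro ⟨Xi, hXi, rfl⟩
      choose B hB using fun i =>
        (Matrix.posSemidef_iff_eq_transpose_mul_self.mp (hXi i))
      refine ⟨fun i => B i * (W i)ᵀ, fun i => ⟨B i, rfl⟩, ?_⟩
      refine Finset.sum_congr rfl fun i _ => ?_
      rw [hB i, conjTranspose_eq_transpose_of_trivial]
      rw [transpose_mul, transpose_transpose]
      simp only [Matrix.mul_assoc]
    · rintro ⟨C, hC, rfl⟩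
      choose B hB using hC
      refine ⟨fun i => (B i)ᵀ * B i, fun i => ?_, ?_⟩
      · have := Matrix.posSemidef_conjTranspose_mul_self (B i)
        rwa [conjTranspose_eq_transpose_of_trivial] at this
      · refine Finset.sum_congr rfl fun i _ => ?_
        have hci : C i = B i * (W i)ᵀ := (hB i).symm
        rw [hci, transpose_mul, transpose_transpose]
        simp only [Matrix.mul_assoc]
  rw [hSK]
  have hKclosed : IsClosed K := by
    have : K = ⋂ i, (fun C : Fin m → Matrix (Fin k) (Fin d) ℝ => C i) ⁻¹'
        (LinearMap.range (mulRightLin W i) : Set (Matrix (Fin k) (Fin d) ℝ)) := by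
      ext C; simp [hKdef]
    rw [this]
    exact isClosed_iInter fun i =>
      (Submodule.closed_of_finiteDimensional _).preimage (continuous_apply i)
  have hFcont : Continuous F := by
    apply continuous_finset_sum
    intro i _
    exact ((continuous_apply i).matrix_transpose).matrix_mul (continuous_apply i)
  haveI : SequentialSpace (Matrix (Fin d) (Fin d) ℝ) :=
    inferInstanceAs (SequentialSpace (Fin d → Fin d → ℝ))
  apply IsSeqClosed.isClosed
  intro Y L hmem hlim
  choose C hCK hCF using hmem
  have htrcont : Continuous fun X : Matrix (Fin d) (Fin d) ℝ => X.trace :=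
    Continuous.matrix_trace continuous_id
  have htr : Filter.Tendsto (fun n => (Y n).trace) Filter.atTop (nhds L.trace) :=
    (htrcont.tendsto L).comp hlim
  obtain ⟨M, hM⟩ := htr.bddAbove_range
  set M' := max M 0 with hM'
  have hM'0 : (0:ℝ) ≤ M' := le_max_right _ _
  set R := Real.sqrt M' with hR
  have hball : ∀ n, C n ∈ Metric.closedBall (0 : Fin m → Matrix (Fin k) (Fin d) ℝ) R := by
    intro n
    rw [mem_closedBall_zero_iff]
    rw [pi_norm_le_iff_of_nonneg (Real.sqrt_nonneg _)]
    intro i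
    rw [Matrix.norm_le_iff (Real.sqrt_nonneg _)]
    intro a b
    apply Real.abs_le_sqrt
    calc (C n i a b) ^ 2 ≤ (∑ j, (C n j)ᵀ * (C n j)).trace := entry_sq_le _ _ _ _
      _ = (Y n).trace := by rw [← hCF n]
      _ ≤ M := hM ⟨n, rfl⟩
      _ ≤ M' := le_max_left _ _
  obtain ⟨Cl, _, φ, hφ, hTend⟩ := (isCompact_closedBall _ _).tendsto_subseq hball
  have hClK : Cl ∈ K :=
    hKclosed.mem_of_tendsto hTend (Filter.Eventually.of_forall fun n => hCK (φ n))
  have h1 : Filter.Tendsto (fun n => F (C (φ n))) Filter.atTop (nhds (F Cl)) :=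
    (hFcont.tendsto Cl).comp hTend
  have h2 : Filter.Tendsto (fun n => F (C (φ n))) Filter.atTop (nhds L) := by
    have : (fun n => F (C (φ n))) = fun n => Y (φ n) := by
      funext n; exact hCF (φ n)
    rw [this]
    exact hlim.comp hφ.tendsto_atTop
  exact ⟨Cl, hClK, tendsto_nhds_unique h1 h2⟩

end MinkowskiSumAux

open MinkowskiSumAux in
theorem minkowski_sum_faces_closed_cone_dual
    {d k m : ℕ} (W : Fin m → Matrix (Fin d) (Fin k) ℝ) :
    IsClosed {X : Matrix (Fin d) (Fin d) ℝ |
        ∃ Xi : Fin m → Matrix (Fin k) (Fin k) ℝ,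
          (∀ i, (Xi i).PosSemidef) ∧ X = ∑ i, W i * Xi i * (W i)ᵀ} ∧
    Convex ℝ {X : Matrix (Fin d) (Fin d) ℝ |
        ∃ Xi : Fin m → Matrix (Fin k) (Fin k) ℝ,
          (∀ i, (Xi i).PosSemidef) ∧ X = ∑ i, W i * Xi i * (W i)ᵀ} ∧
    (∀ X ∈ {X : Matrix (Fin d) (Fin d) ℝ |
        ∃ Xi : Fin m → Matrix (Fin k) (Fin k) ℝ,
          (∀ i, (Xi i).PosSemidef) ∧ X = ∑ i, W i * Xi i * (W i)ᵀ},
      ∀ a : ℝ, 0 ≤ a → a • X ∈ {X : Matrix (Fin d) (Fin d) ℝ |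
        ∃ Xi : Fin m → Matrix (Fin k) (Fin k) ℝ,
          (∀ i, (Xi i).PosSemidef) ∧ X = ∑ i, W i * Xi i * (W i)ᵀ}) ∧
    ({Y : Matrix (Fin d) (Fin d) ℝ | Y.IsSymm ∧
        ∀ X ∈ {X : Matrix (Fin d) (Fin d) ℝ |
          ∃ Xi : Fin m → Matrix (Fin k) (Fin k) ℝ,
            (∀ i, (Xi i).PosSemidef) ∧ X = ∑ i, W i * Xi i * (W i)ᵀ},
          0 ≤ (Y * X).trace} =
      {Y : Matrix (Fin d) (Fin d) ℝ | Y.IsSymm ∧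
        ∀ i, ((W i)ᵀ * Y * W i).PosSemidef}) ∧
    ({X : Matrix (Fin d) (Fin d) ℝ |
        ∃ Xi : Fin m → Matrix (Fin k) (Fin k) ℝ,
          (∀ i, (Xi i).PosSemidef) ∧ X = ∑ i, W i * Xi i * (W i)ᵀ} ⊆
      {X : Matrix (Fin d) (Fin d) ℝ | X.PosSemidef}) ∧
    ({X : Matrix (Fin d) (Fin d) ℝ | X.PosSemidef} ⊆
      {X : Matrix (Fin d) (Fin d) ℝ | X.IsSymm ∧
        ∀ i, ((W i)ᵀ * X * W i).PosSemidef}) := by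
  classical
  refine ⟨closed_S W, ?_, ?_, ?_, ?_, ?_⟩
  · -- Convexity
    rintro X ⟨Xi, hXi, rfl⟩ Y ⟨Yi, hYi, rfl⟩ a b ha hb _
    refine ⟨fun i => a • Xi i + b • Yi i,
      fun i => psd_add (psd_smul (hXi i) ha) (psd_smul (hYi i) hb), ?_⟩
    rw [Finset.smul_sum, Finset.smul_sum, ← Finset.sum_add_distrib]
    refine Finset.sum_congr rfl fun i _ => ?_
    simp [Matrix.mul_add, Matrix.add_mul, Matrix.mul_smul, Matrix.smul_mul]
  · -- cone (smul)
    rintro X ⟨Xi, hXi, rfl⟩ a ha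
    refine ⟨fun i => a • Xi i, fun i => psd_smul (hXi i) ha, ?_⟩
    rw [Finset.smul_sum]
    refine Finset.sum_congr rfl fun i _ => ?_
    simp [Matrix.mul_smul, Matrix.smul_mul]
  · -- dual cone equality
    ext Y
    simp only [Set.mem_setOf_eq]
    constructor
    · rintro ⟨hY1, hY2⟩
      refine ⟨hY1, fun i => Matrix.PosSemidef.of_dotProduct_mulVec_nonneg ?_ fun x => ?_⟩
      · rw [Matrix.IsHermitian, conjTranspose_eq_transpose_of_trivial,
          transpose_mul, transpose_mul, transpose_transpose, hY1.eq, Matrix.mul_assoc]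
      · have hsum : ∑ j, W j * (fun j => if j = i then vecMulVec x x else 0) j * (W j)ᵀ
            = W i * vecMulVec x x * (W i)ᵀ := by
          rw [Finset.sum_eq_single i]
          · simp
          · intro j _ hj; simp [hj]
          · intro h; exact absurd (Finset.mem_univ i) h
        have h0 := hY2 (W i * vecMulVec x x * (W i)ᵀ)
          ⟨fun j => if j = i then vecMulVec x x else 0,
            fun j => by
              by_cases hj : j = i
              · simpa [hj] using psd_vecMulVec x
              · simpa [hj] using Matrix.PosSemidef.zero,
            hsum.symm⟩
        have key : (Y * (W i * vecMulVec x x * (W i)ᵀ)).trace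
            = x ⬝ᵥ (((W i)ᵀ * Y * W i) *ᵥ x) := by
          rw [← trace_mul_vecMulVec ((W i)ᵀ * Y * W i) x x]
          rw [show Y * (W i * vecMulVec x x * (W i)ᵀ)
              = (Y * W i * vecMulVec x x) * (W i)ᵀ by simp only [Matrix.mul_assoc]]
          rw [Matrix.trace_mul_comm]
          simp only [Matrix.mul_assoc]
        rw [key] at h0
        simpa using h0
    · rintro ⟨hY1, hY2⟩
      refine ⟨hY1, ?_⟩
      rintro X ⟨Xi, hXi, rfl⟩
      rw [Matrix.mul_sum, trace_sum]
      refine Finset.sum_nonneg fun i _ => ?_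
      have hkey : (Y * (W i * Xi i * (W i)ᵀ)).trace
          = (((W i)ᵀ * Y * W i) * Xi i).trace := by
        rw [show Y * (W i * Xi i * (W i)ᵀ)
            = (Y * W i * Xi i) * (W i)ᵀ by simp only [Matrix.mul_assoc]]
        rw [Matrix.trace_mul_comm]
        simp only [Matrix.mul_assoc]
      rw [hkey]
      exact trace_mul_psd_nonneg (hY2 i) (hXi i)
  · -- S ⊆ PSD
    rintro X ⟨Xi, hXi, rfl⟩
    exact psd_sum fun i => psd_conj_left (hXi i) (W i)
  · -- PSD ⊆ C(W)
    intro X hX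
    refine ⟨?_, fun i => psd_conj_right hX (W i)⟩
    rw [Matrix.IsSymm, ← conjTranspose_eq_transpose_of_trivial, hX.1]
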